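/- There exists a compact set Ω ⊂ ℝ² which is the support of a polyhedral complex and which is star shaped (with respect to the origin) but not polyhedrally star shaped. Concretely, Ω = [−1,1]×[−1,1] ∪ {0}×[1,2] ∪ [1,2]×{0} is star shaped with centre (0,0), but there is no polyhedral complex 𝒟 with Ω open in |𝒟| such that σ ∩ Ω is star shaped with centre (0,0) for all maximal σ ∈ 𝒟. -/

import Mathlib

open Set

noncomputable section

abbrev Vec (r : ℕ) : Type := Fin r → ℝ

/-- A (convex) polyhedron in `ℝ^r`: a finite intersection of closed half-spaces. -/
def IsPolyhedron {r : ℕ} (σ : Set (Vec r)) : Prop :=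
  ∃ (n : ℕ) (f : Fin n → (Vec r →ₗ[ℝ] ℝ)) (c : Fin n → ℝ),
    σ = {x | ∀ i, f i x ≤ c i}

/-- `τ` is a face of `σ`: either `σ` itself, or the subset of `σ` where a linear
functional bounded above on `σ` attains a given bound. -/
def IsFaceOf {r : ℕ} (τ σ : Set (Vec r)) : Prop :=
  τ = σ ∨ ∃ (g : Vec r →ₗ[ℝ] ℝ) (c : ℝ),
    (∀ x ∈ σ, g x ≤ c) ∧ τ = {x ∈ σ | g x = c}

/-- A polyhedral complex in `ℝ^r`: a finite set of convex polyhedra, closed under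
taking faces, such that the intersection of any two members is a face of both. -/
structure PolyComplex (r : ℕ) where
  polys : Set (Set (Vec r))
  finite : polys.Finite
  poly_mem : ∀ σ ∈ polys, IsPolyhedron σ
  face_mem : ∀ σ ∈ polys, ∀ τ, IsFaceOf τ σ → τ ∈ polys
  inter_face : ∀ σ ∈ polys, ∀ τ ∈ polys, IsFaceOf (σ ∩ τ) σ

/-- The support of a polyhedral complex. -/
def PolyComplex.support {r : ℕ} (C : PolyComplex r) : Set (Vec r) :=
  ⋃ σ ∈ C.polys, σ

/-- The relative interior of a polyhedron: the polyhedron minus all its proper faces. -/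
def relint {r : ℕ} (σ : Set (Vec r)) : Set (Vec r) :=
  {x ∈ σ | ∀ τ, IsFaceOf τ σ → τ ≠ σ → x ∉ τ}

/-- The polyhedral star of `σ` in `C`: the union of the relative interiors of all
members of `C` having `σ` as a face. -/
def polyStar {r : ℕ} (C : PolyComplex r) (σ : Set (Vec r)) : Set (Vec r) :=
  ⋃ τ ∈ {τ ∈ C.polys | IsFaceOf σ τ}, relint τ

/-- `Ω` is an open subset of the support of `C` (subspace topology). -/
def OpenInSupport {r : ℕ} (C : PolyComplex r) (Ω : Set (Vec r)) : Prop :=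
  ∃ U : Set (Vec r), IsOpen U ∧ Ω = U ∩ C.support

/-- `S` is star shaped with centre `z`. -/
def StarShapedWith {r : ℕ} (z : Vec r) (S : Set (Vec r)) : Prop :=
  ∀ x ∈ S, ∀ t ∈ Icc (0 : ℝ) 1, z + t • (x - z) ∈ S

/-- `Ω` is polyhedrally star shaped with centre `z`: there is a polyhedral complex `D`
such that `Ω` is an open subset of `|D|` and `σ ∩ Ω` is star shaped with centre `z`
for every maximal `σ ∈ D`. -/
def PolyStarShaped {r : ℕ} (z : Vec r) (Ω : Set (Vec r)) : Prop :=
  ∃ D : PolyComplex r, OpenInSupport D Ω ∧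
    ∀ σ ∈ D.polys, (∀ τ ∈ D.polys, IsFaceOf σ τ → τ = σ) →
      StarShapedWith z (σ ∩ Ω)
namespace StarAux

lemma isFaceOf_empty {r : ℕ} (σ : Set (Vec r)) : IsFaceOf ∅ σ := by
  refine Or.inr ⟨0, 1, fun x _ => by norm_num, ?_⟩
  ext x; simp

lemma IsFaceOf.subset' {r : ℕ} {τ σ : Set (Vec r)} (h : IsFaceOf τ σ) : τ ⊆ σ := by
  rcases h with rfl | ⟨g, c, _, rfl⟩
  · exact subset_rfl
  · exact fun x hx => hx.1

lemma IsPolyhedron.convex' {r : ℕ} {σ : Set (Vec r)} (h : IsPolyhedron σ) : Convex ℝ σ := by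
  obtain ⟨n, f, c, rfl⟩ := h
  have : {x : Vec r | ∀ i, f i x ≤ c i} = ⋂ i, {x | f i x ≤ c i} := by
    ext x; simp
  rw [this]
  exact convex_iInter fun i => convex_halfSpace_le (f i).isLinear (c i)

lemma IsPolyhedron.isClosed' {r : ℕ} {σ : Set (Vec r)} (h : IsPolyhedron σ) : IsClosed σ := by
  obtain ⟨n, f, c, rfl⟩ := h
  have : {x : Vec r | ∀ i, f i x ≤ c i} = ⋂ i, {x | f i x ≤ c i} := by
    ext x; simp
  rw [this]
  exact isClosed_iInter fun i =>
    isClosed_le (f i).continuous_of_finiteDimensional continuous_const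

lemma vec_decomp (x : Vec 2) : x = x 0 • ![(1:ℝ),0] + x 1 • ![(0:ℝ),1] := by
  funext i
  fin_cases i <;> simp

lemma lin_apply (g : Vec 2 →ₗ[ℝ] ℝ) (x : Vec 2) :
    g x = x 0 * g ![1,0] + x 1 * g ![0,1] := by
  have h : g x = g (x 0 • ![(1:ℝ),0] + x 1 • ![(0:ℝ),1]) := by
    rw [← vec_decomp x]
  rw [h, map_add, map_smul, map_smul, smul_eq_mul, smul_eq_mul]

end StarAux
namespace StarAux

/-- Interval from an integer pair. -/
def iv (p : ℤ × ℤ) : Set ℝ := Icc (p.1 : ℝ) (p.2 : ℝ)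

/-- Box from a pair of integer pairs. -/
def bx (d : (ℤ × ℤ) × (ℤ × ℤ)) : Set (Vec 2) := {x | x 0 ∈ iv d.1 ∧ x 1 ∈ iv d.2}

lemma bx_poly (d : (ℤ × ℤ) × (ℤ × ℤ)) : IsPolyhedron (bx d) := by
  refine ⟨4, ![LinearMap.proj 0, -LinearMap.proj 0, LinearMap.proj 1, -LinearMap.proj 1],
    ![(d.1.2 : ℝ), -(d.1.1 : ℝ), (d.2.2 : ℝ), -(d.2.1 : ℝ)], ?_⟩
  ext x
  simp only [bx, iv, mem_setOf_eq, mem_Icc]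
  constructor
  · rintro ⟨⟨h1, h2⟩, h3, h4⟩ i
    fin_cases i <;> simp [LinearMap.proj] <;> linarith
  · intro h
    have h0 := h 0; have h1 := h 1; have h2 := h 2; have h3 := h 3
    simp [LinearMap.proj] at h0 h1 h2 h3
    exact ⟨⟨by linarith, h0⟩, by linarith, h2⟩

/-- one-dimensional maximizer data for a linear functional on an interval -/
lemma iv_max {a b : ℤ} (hab : a ≤ b) (p : ℝ) :
    ∃ (m : ℝ) (r : ℤ × ℤ), (r = (a, b) ∨ r = (a, a) ∨ r = (b, b)) ∧ (iv r).Nonempty ∧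
      (∀ y ∈ Icc (a : ℝ) b, p * y ≤ m) ∧
      (∀ y : ℝ, y ∈ iv r ↔ y ∈ Icc (a : ℝ) b ∧ p * y = m) := by
  have hab' : (a : ℝ) ≤ b := by exact_mod_cast hab
  rcases lt_trichotomy p 0 with hp | hp | hp
  · refine ⟨p * a, (a, a), Or.inr (Or.inl rfl), ⟨a, by simp [iv]⟩, ?_, ?_⟩
    · rintro y ⟨hy1, hy2⟩; nlinarith
    · intro y
      simp only [iv, mem_Icc]
      constructor
      · rintro ⟨h1, h2⟩
        have : y = a := le_antisymm h2 h1
        subst this; exact ⟨⟨le_refl _, hab'⟩, rfl⟩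
      · rintro ⟨_, h2⟩
        have : y = a := by
          have := mul_left_cancel₀ (ne_of_lt hp) h2; linarith [this]
        simp [this]
  · refine ⟨0, (a, b), Or.inl rfl, ⟨a, by simp [iv, hab']⟩, ?_, ?_⟩
    · intro y _; simp [hp]
    · intro y; simp [iv, hp]
  · refine ⟨p * b, (b, b), Or.inr (Or.inr rfl), ⟨b, by simp [iv]⟩, ?_, ?_⟩
    · rintro y ⟨hy1, hy2⟩; nlinarith
    · intro y
      simp only [iv, mem_Icc]
      constructor
      · rintro ⟨h1, h2⟩
        have : y = b := le_antisymm h2 h1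
        subst this; exact ⟨⟨hab', le_refl _⟩, rfl⟩
      · rintro ⟨_, h2⟩
        have : y = b := by
          have := mul_left_cancel₀ (ne_of_gt hp) h2; linarith [this]
        simp [this]

/-- classification of the faces of a box with sane bounds -/
lemma face_classify {d : (ℤ × ℤ) × (ℤ × ℤ)} (h1 : d.1.1 ≤ d.1.2) (h2 : d.2.1 ≤ d.2.2)
    {τ : Set (Vec 2)} (hτ : IsFaceOf τ (bx d)) :
    τ = ∅ ∨ ∃ r : (ℤ × ℤ) × (ℤ × ℤ),
      (r.1 = d.1 ∨ r.1 = (d.1.1, d.1.1) ∨ r.1 = (d.1.2, d.1.2)) ∧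
      (r.2 = d.2 ∨ r.2 = (d.2.1, d.2.1) ∨ r.2 = (d.2.2, d.2.2)) ∧ τ = bx r := by
  rcases hτ with rfl | ⟨g, e, hge, rfl⟩
  · exact Or.inr ⟨d, Or.inl rfl, Or.inl rfl, rfl⟩
  obtain ⟨m1, r1, hr1, ⟨y1, hy1⟩, hb1, hc1⟩ := iv_max h1 (g ![1, 0])
  obtain ⟨m2, r2, hr2, ⟨y2, hy2⟩, hb2, hc2⟩ := iv_max h2 (g ![0, 1])
  have hy1' := (hc1 y1).mp hy1
  have hy2' := (hc2 y2).mp hy2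
  have hwit : (![y1, y2] : Vec 2) ∈ bx d := by
    refine ⟨?_, ?_⟩ <;> simp [iv, bx]
    · exact hy1'.1
    · exact hy2'.1
  have hsum : m1 + m2 ≤ e := by
    have h := hge _ hwit
    rw [lin_apply] at h
    simp only [Matrix.cons_val_zero, Matrix.cons_val_one, Matrix.head_cons] at h
    linarith [hy1'.2, hy2'.2]
  by_cases he : m1 + m2 = e
  · refine Or.inr ⟨(r1, r2), hr1, hr2, ?_⟩
    ext x
    simp only [mem_setOf_eq, bx]
    constructor
    · rintro ⟨⟨hx1, hx2⟩, hgx⟩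
      rw [lin_apply] at hgx
      have b1 := hb1 _ hx1
      have b2 := hb2 _ hx2
      refine ⟨(hc1 _).mpr ⟨hx1, ?_⟩, (hc2 _).mpr ⟨hx2, ?_⟩⟩ <;> nlinarith
    · rintro ⟨hx1, hx2⟩
      have c1 := (hc1 _).mp hx1
      have c2 := (hc2 _).mp hx2
      refine ⟨⟨c1.1, c2.1⟩, ?_⟩
      rw [lin_apply]
      nlinarith [c1.2, c2.2]
  · left
    ext x
    simp only [mem_setOf_eq, mem_empty_iff_false, iff_false, not_and]
    rintro ⟨hx1, hx2⟩ hgx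
    have b1 := hb1 _ hx1
    have b2 := hb2 _ hx2
    rw [lin_apply] at hgx
    have : m1 + m2 < e := lt_of_le_of_ne hsum he
    nlinarith

end StarAux
namespace StarAux

/-- sufficiency: a coordinatewise-face box is a face -/
lemma box_face {d : (ℤ × ℤ) × (ℤ × ℤ)} {A B : Set ℝ} {p q m1 m2 : ℝ}
    (hA1 : ∀ y ∈ iv d.1, p * y ≤ m1) (hA2 : ∀ y : ℝ, y ∈ A ↔ y ∈ iv d.1 ∧ p * y = m1)
    (hB1 : ∀ y ∈ iv d.2, q * y ≤ m2) (hB2 : ∀ y : ℝ, y ∈ B ↔ y ∈ iv d.2 ∧ q * y = m2) :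
    IsFaceOf {x : Vec 2 | x 0 ∈ A ∧ x 1 ∈ B} (bx d) := by
  refine Or.inr ⟨p • LinearMap.proj 0 + q • LinearMap.proj 1, m1 + m2, ?_, ?_⟩
  · rintro x ⟨hx1, hx2⟩
    have := hA1 _ hx1
    have := hB1 _ hx2
    simp only [LinearMap.add_apply, LinearMap.smul_apply, LinearMap.proj_apply, smul_eq_mul]
    linarith
  · ext x
    simp only [mem_setOf_eq, bx, LinearMap.add_apply, LinearMap.smul_apply,
      LinearMap.proj_apply, smul_eq_mul]
    constructor
    · rintro ⟨hxA, hxB⟩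
      have c1 := (hA2 _).mp hxA
      have c2 := (hB2 _).mp hxB
      exact ⟨⟨c1.1, c2.1⟩, by linarith [c1.2, c2.2]⟩
    · rintro ⟨⟨hx1, hx2⟩, hsum⟩
      have := hA1 _ hx1
      have := hB1 _ hx2
      exact ⟨(hA2 _).mpr ⟨hx1, by linarith⟩, (hB2 _).mpr ⟨hx2, by linarith⟩⟩

/-- the three coordinate face shapes, with data -/
lemma iv_face_data {a b : ℤ} (hab : a ≤ b) {r : ℤ × ℤ}
    (hr : r = (a, b) ∨ r = (a, a) ∨ r = (b, b)) :
    ∃ p m : ℝ, (∀ y ∈ Icc (a : ℝ) b, p * y ≤ m) ∧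
      (∀ y : ℝ, y ∈ iv r ↔ y ∈ Icc (a : ℝ) b ∧ p * y = m) := by
  have hab' : (a : ℝ) ≤ b := by exact_mod_cast hab
  rcases hr with rfl | rfl | rfl
  · exact ⟨0, 0, fun y _ => by simp, fun y => by simp [iv]⟩
  · refine ⟨-1, -(a : ℝ), fun y hy => by simp [iv] at hy ⊢; linarith [hy.1], fun y => ?_⟩
    simp only [iv, mem_Icc]
    constructor
    · rintro ⟨hy1, hy2⟩
      have : y = a := le_antisymm hy2 hy1
      subst this; exact ⟨⟨le_refl _, hab'⟩, by ring⟩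
    · rintro ⟨⟨hy1, _⟩, hy2⟩
      have : y = a := by linarith
      simp [this]
  · refine ⟨1, (b : ℝ), fun y hy => by simp [iv] at hy ⊢; linarith [hy.2], fun y => ?_⟩
    simp only [iv, mem_Icc]
    constructor
    · rintro ⟨hy1, hy2⟩
      have : y = b := le_antisymm hy2 hy1
      subst this; exact ⟨⟨hab', le_refl _⟩, by ring⟩
    · rintro ⟨⟨_, hy2⟩, hy3⟩
      have : y = b := by linarith
      simp [this]

end StarAux
namespace StarAux

def eD : (ℤ × ℤ) × (ℤ × ℤ) := ((1, 0), (1, 0))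

def Ds : List ((ℤ × ℤ) × (ℤ × ℤ)) :=
  [((-1,0),(-1,0)), ((-1,0),(0,1)), ((0,1),(-1,0)), ((0,1),(0,1)),
   ((0,0),(1,2)), ((1,2),(0,0)),
   ((-1,0),(-1,-1)), ((-1,0),(0,0)), ((-1,0),(1,1)),
   ((0,1),(-1,-1)), ((0,1),(0,0)), ((0,1),(1,1)),
   ((-1,-1),(-1,0)), ((0,0),(-1,0)), ((1,1),(-1,0)),
   ((-1,-1),(0,1)), ((0,0),(0,1)), ((1,1),(0,1)),
   ((-1,-1),(-1,-1)), ((-1,-1),(0,0)), ((-1,-1),(1,1)),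
   ((0,0),(-1,-1)), ((0,0),(0,0)), ((0,0),(1,1)),
   ((1,1),(-1,-1)), ((1,1),(0,0)), ((1,1),(1,1)),
   ((0,0),(2,2)), ((2,2),(0,0)),
   ((1,0),(1,0))]

def fsL (p : ℤ × ℤ) : List (ℤ × ℤ) := [p, (p.1, p.1), (p.2, p.2)]

def Q (p q : ℤ × ℤ) : Prop :=
  (min p.2 q.2 < max p.1 q.1) ∨ (p.1 ≤ p.2 ∧ (max p.1 q.1, min p.2 q.2) ∈ fsL p)

instance (p q : ℤ × ℤ) : Decidable (Q p q) := by
  unfold Q; infer_instance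

lemma Ds_closed : ∀ d ∈ Ds, d ≠ eD →
    (d.1.1 ≤ d.1.2 ∧ d.2.1 ≤ d.2.2 ∧
      ∀ r1 ∈ fsL d.1, ∀ r2 ∈ fsL d.2, (r1, r2) ∈ Ds) := by decide

lemma Ds_inter : ∀ d ∈ Ds, ∀ d' ∈ Ds, Q d.1 d'.1 ∧ Q d.2 d'.2 := by decide

lemma eD_mem : eD ∈ Ds := by decide

lemma bx_eD : bx eD = ∅ := by
  ext x
  simp only [bx, eD, iv, mem_Icc, mem_setOf_eq, mem_empty_iff_false, iff_false, not_and]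
  rintro ⟨h1, h2⟩
  norm_num at h1 h2
  linarith

end StarAux
namespace StarAux

lemma fsL_mem {p r : ℤ × ℤ} (h : r ∈ fsL p) :
    r = p ∨ r = (p.1, p.1) ∨ r = (p.2, p.2) := by
  simpa [fsL] using h

lemma iv_inter (p q : ℤ × ℤ) :
    iv p ∩ iv q = iv (max p.1 q.1, min p.2 q.2) := by
  simp only [iv, Set.Icc_inter_Icc]
  push_cast
  rfl

lemma bx_inter (d d' : (ℤ × ℤ) × (ℤ × ℤ)) :
    bx d ∩ bx d' = {x : Vec 2 | x 0 ∈ iv d.1 ∩ iv d'.1 ∧ x 1 ∈ iv d.2 ∩ iv d'.2} := by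
  ext x
  simp only [bx, mem_inter_iff, mem_setOf_eq]
  tauto

lemma iv_empty {p q : ℤ × ℤ} (h : min p.2 q.2 < max p.1 q.1) :
    iv p ∩ iv q = ∅ := by
  rw [iv_inter]
  simp only [iv]
  apply Set.Icc_eq_empty
  intro hc
  have : ((max p.1 q.1 : ℤ) : ℝ) ≤ ((min p.2 q.2 : ℤ) : ℝ) := hc
  rw [Int.cast_le] at this
  omega

/-- The polyhedral complex whose support is Ω. -/
def C : PolyComplex 2 where
  polys := bx '' {d | d ∈ Ds}
  finite := (Ds.finite_toSet).image bx
  poly_mem := by rintro σ ⟨d, _, rfl⟩; exact bx_poly d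
  face_mem := by
    rintro σ ⟨d, hd, rfl⟩ τ hτ
    by_cases hde : d = eD
    · subst hde
      have hτe : τ = bx eD := by
        rcases hτ with rfl | ⟨g, c, _, rfl⟩
        · rfl
        · rw [bx_eD]; ext x; simp
      exact ⟨eD, eD_mem, hτe.symm⟩
    · obtain ⟨h1, h2, hcl⟩ := Ds_closed d hd hde
      rcases face_classify h1 h2 hτ with rfl | ⟨r, hr1, hr2, rfl⟩
      · exact ⟨eD, eD_mem, bx_eD⟩
      · refine ⟨r, ?_, rfl⟩
        have m1 : r.1 ∈ fsL d.1 := by rcases hr1 with h | h | h <;> simp [fsL, h]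
        have m2 : r.2 ∈ fsL d.2 := by rcases hr2 with h | h | h <;> simp [fsL, h]
        exact hcl r.1 m1 r.2 m2
  inter_face := by
    rintro σ ⟨d, hd, rfl⟩ τ ⟨d', hd', rfl⟩
    obtain ⟨hQ1, hQ2⟩ := Ds_inter d hd d' hd'
    rcases hQ1 with h | ⟨hpb, hmem⟩
    · have : bx d ∩ bx d' = ∅ := by
        rw [bx_inter, iv_empty h]
        ext x; simp
      rw [this]; exact isFaceOf_empty _
    rcases hQ2 with h | ⟨hqb, hmem2⟩
    · have : bx d ∩ bx d' = ∅ := by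
        rw [bx_inter, iv_empty h]
        ext x; simp
      rw [this]; exact isFaceOf_empty _
    · rw [bx_inter, iv_inter, iv_inter]
      obtain ⟨p, m1, hA1, hA2⟩ := iv_face_data hpb (fsL_mem hmem)
      obtain ⟨q, m2, hB1, hB2⟩ := iv_face_data hqb (fsL_mem hmem2)
      exact box_face hA1 hA2 hB1 hB2

end StarAux
namespace StarAux

def Om : Set (Vec 2) :=
  {x : Vec 2 | (|x 0| ≤ 1 ∧ |x 1| ≤ 1) ∨
    (x 0 = 0 ∧ x 1 ∈ Icc (1 : ℝ) 2) ∨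
    (x 1 = 0 ∧ x 0 ∈ Icc (1 : ℝ) 2)}

lemma support_mem (x : Vec 2) : x ∈ C.support ↔ ∃ d ∈ Ds, x ∈ bx d := by
  simp only [PolyComplex.support, C, mem_iUnion, mem_image, mem_setOf_eq]
  constructor
  · rintro ⟨σ, ⟨⟨d, hd, rfl⟩, hx⟩⟩
    exact ⟨d, hd, hx⟩
  · rintro ⟨d, hd, hx⟩
    exact ⟨bx d, ⟨d, hd, rfl⟩, hx⟩

lemma Om_eq_support : Om = C.support := by
  ext x
  rw [support_mem]
  constructor
  · rintro (⟨h1, h2⟩ | ⟨h1, h2, h3⟩ | ⟨h1, h2, h3⟩)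
    · rw [abs_le] at h1 h2
      rcases le_or_gt (x 0) 0 with hx0 | hx0 <;> rcases le_or_gt (x 1) 0 with hx1 | hx1
      · exact ⟨((-1,0),(-1,0)), by decide, by
          simp only [bx, iv, mem_Icc, mem_setOf_eq]; push_cast
          exact ⟨⟨h1.1, hx0⟩, h2.1, hx1⟩⟩
      · exact ⟨((-1,0),(0,1)), by decide, by
          simp only [bx, iv, mem_Icc, mem_setOf_eq]; push_cast
          exact ⟨⟨h1.1, hx0⟩, hx1.le, h2.2⟩⟩
      · exact ⟨((0,1),(-1,0)), by decide, by
          simp only [bx, iv, mem_Icc, mem_setOf_eq]; push_cast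
          exact ⟨⟨hx0.le, h1.2⟩, h2.1, hx1⟩⟩
      · exact ⟨((0,1),(0,1)), by decide, by
          simp only [bx, iv, mem_Icc, mem_setOf_eq]; push_cast
          exact ⟨⟨hx0.le, h1.2⟩, hx1.le, h2.2⟩⟩
    · exact ⟨((0,0),(1,2)), by decide, by
        simp only [bx, iv, mem_Icc, mem_setOf_eq]; push_cast
        exact ⟨⟨h1.ge, h1.le⟩, h2, h3⟩⟩
    · exact ⟨((1,2),(0,0)), by decide, by
        simp only [bx, iv, mem_Icc, mem_setOf_eq]; push_cast
        exact ⟨⟨h2, h3⟩, h1.ge, h1.le⟩⟩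
  · rintro ⟨d, hd, hx⟩
    fin_cases hd <;>
    · simp only [bx, iv, mem_Icc, mem_setOf_eq] at hx
      push_cast at hx
      obtain ⟨⟨a1, a2⟩, b1, b2⟩ := hx
      simp only [Om, mem_setOf_eq, mem_Icc]
      first
      | (left; rw [abs_le, abs_le]; exact ⟨⟨by linarith, by linarith⟩, by linarith, by linarith⟩)
      | (right; left; exact ⟨by linarith, by linarith, by linarith⟩)
      | (right; right; exact ⟨by linarith, by linarith, by linarith⟩)

end StarAux
namespace StarAux

lemma Om_closed : IsClosed Om := by
  have : Om = ({x : Vec 2 | |x 0| ≤ 1} ∩ {x | |x 1| ≤ 1}) ∪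
      (({x : Vec 2 | x 0 = 0} ∩ {x | x 1 ∈ Icc (1:ℝ) 2}) ∪
       ({x : Vec 2 | x 1 = 0} ∩ {x | x 0 ∈ Icc (1:ℝ) 2})) := by
    ext x; simp only [Om, mem_setOf_eq, mem_union, mem_inter_iff]
  rw [this]
  refine IsClosed.union (IsClosed.inter ?_ ?_) (IsClosed.union (IsClosed.inter ?_ ?_)
    (IsClosed.inter ?_ ?_))
  · exact isClosed_le ((continuous_apply 0).abs) continuous_const
  · exact isClosed_le ((continuous_apply 1).abs) continuous_const
  · exact isClosed_eq (continuous_apply 0) continuous_const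
  · exact isClosed_Icc.preimage (continuous_apply 1)
  · exact isClosed_eq (continuous_apply 1) continuous_const
  · exact isClosed_Icc.preimage (continuous_apply 0)

lemma Om_compact : IsCompact Om := by
  refine IsCompact.of_isClosed_subset (isCompact_Icc (a := fun _ : Fin 2 => (-2:ℝ))
    (b := fun _ => (2:ℝ))) Om_closed ?_
  intro x hx
  rw [mem_Icc]
  have : ∀ i : Fin 2, -2 ≤ x i ∧ x i ≤ 2 := by
    intro i
    rcases hx with ⟨h1, h2⟩ | ⟨h1, h2, h3⟩ | ⟨h1, h2, h3⟩
    · rw [abs_le] at h1 h2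
      fin_cases i <;> exact ⟨by simp; linarith, by simp; linarith⟩
    · fin_cases i <;> exact ⟨by simp; linarith, by simp; linarith⟩
    · fin_cases i <;> exact ⟨by simp; linarith, by simp; linarith⟩
  exact ⟨fun i => (this i).1, fun i => (this i).2⟩

lemma Om_star : StarShapedWith (0 : Vec 2) Om := by
  intro x hx t ht
  obtain ⟨ht0, ht1⟩ := ht
  have hpt : (0 : Vec 2) + t • (x - 0) = t • x := by simp
  rw [hpt]
  simp only [Om, mem_setOf_eq, Pi.smul_apply, smul_eq_mul, mem_Icc] at hx ⊢
  rcases hx with ⟨h1, h2⟩ | ⟨h1, ⟨h2, h3⟩⟩ | ⟨h1, ⟨h2, h3⟩⟩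
  · left
    rw [abs_mul, abs_mul, abs_of_nonneg ht0]
    constructor <;> nlinarith [abs_nonneg (x 0), abs_nonneg (x 1)]
  · by_cases h : t * x 1 ≤ 1
    · left
      rw [h1, mul_zero]
      constructor
      · simp
      · rw [abs_of_nonneg (by nlinarith)]; exact h
    · right; left
      rw [h1, mul_zero]
      exact ⟨rfl, by linarith, by nlinarith⟩
  · by_cases h : t * x 0 ≤ 1
    · left
      rw [h1, mul_zero]
      constructor
      · rw [abs_of_nonneg (by nlinarith)]; exact h
      · simp
    · right; right
      rw [h1, mul_zero]
      exact ⟨rfl, by linarith, by nlinarith⟩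

end StarAux
namespace StarAux

lemma exists_maximal (D : PolyComplex 2) {p : Vec 2} (hp : p ∈ D.support) :
    ∃ σ, σ ∈ D.polys ∧ p ∈ σ ∧ ∀ τ ∈ D.polys, IsFaceOf σ τ → τ = σ := by
  have hne : ({σ ∈ D.polys | p ∈ σ}).Nonempty := by
    simp only [PolyComplex.support, mem_iUnion] at hp
    obtain ⟨σ, hσ, hpσ⟩ := hp
    exact ⟨σ, hσ, hpσ⟩
  obtain ⟨σ, ⟨hσD, hpσ⟩, hmax⟩ := Set.Finite.exists_maximalFor id _
    (D.finite.subset (sep_subset _ _)) hne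
  refine ⟨σ, hσD, hpσ, fun τ hτ hface => ?_⟩
  have hsub : σ ⊆ τ := IsFaceOf.subset' hface
  exact (le_antisymm hsub (hmax ⟨hτ, hsub hpσ⟩ hsub)).symm

lemma mem_Om_top : (![0, 2] : Vec 2) ∈ Om := by
  right; left
  refine ⟨by simp, ?_⟩
  simp only [Matrix.cons_val_one, Matrix.head_cons, mem_Icc]
  norm_num

/-- Any convex subset of the support containing the tip `(0,2)` lies in the line `x₀ = 0`. -/
lemma inLine (D : PolyComplex 2) (U : Set (Vec 2)) (hU : IsOpen U)
    (hΩ : Om = U ∩ D.support) {σ : Set (Vec 2)} (hσsup : σ ⊆ D.support)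
    (hconv : Convex ℝ σ) (htop : (![0, 2] : Vec 2) ∈ σ) : ∀ w ∈ σ, w 0 = 0 := by
  intro w hw
  by_contra hw0
  set u : Vec 2 := ![0, 2] with hu
  have huU : u ∈ U := by
    have := mem_Om_top
    rw [hΩ] at this
    exact this.1
  obtain ⟨ε, hε, hball⟩ := Metric.isOpen_iff.mp hU u huU
  set K : ℝ := ‖w - u‖ with hK
  set s : ℝ := min 1 (min (ε / (K + 1)) (1 / (|w 1 - 2| + 1))) / 2 with hs
  have hK0 : 0 ≤ K := norm_nonneg _
  have hs0 : 0 < s := by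
    apply div_pos _ two_pos
    apply lt_min one_pos
    apply lt_min (div_pos hε (by linarith)) (div_pos one_pos (by positivity))
  have hs1 : s ≤ 1 := by
    rw [hs]
    have := min_le_left 1 (min (ε / (K + 1)) (1 / (|w 1 - 2| + 1)))
    linarith
  have hsK : s * K < ε := by
    have h1 : s ≤ (ε / (K + 1)) / 2 := by
      rw [hs]
      have h := (min_le_right 1 (min (ε / (K + 1)) (1 / (|w 1 - 2| + 1)))).trans
        (min_le_left _ _)
      linarith
    have h2 : (ε / (K + 1)) * (K + 1) = ε := by field_simp
    nlinarith [div_pos hε (show (0:ℝ) < K + 1 by linarith)]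
  have hsw : s * |w 1 - 2| < 1 := by
    have h1 : s ≤ (1 / (|w 1 - 2| + 1)) / 2 := by
      rw [hs]
      have h := (min_le_right 1 (min (ε / (K + 1)) (1 / (|w 1 - 2| + 1)))).trans
        (min_le_right _ _)
      linarith
    have ha : (0:ℝ) ≤ |w 1 - 2| := abs_nonneg _
    have h2 : (1 / (|w 1 - 2| + 1)) * (|w 1 - 2| + 1) = 1 := by field_simp
    nlinarith [div_pos one_pos (show (0:ℝ) < |w 1 - 2| + 1 by linarith)]
  set x : Vec 2 := u + s • (w - u) with hx
  have hxσ : x ∈ σ := by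
    have := hconv htop hw (by linarith : (0:ℝ) ≤ 1 - s) hs0.le (by ring)
    convert this using 1
    rw [hx]
    module
  have hxU : x ∈ U := by
    apply hball
    have : dist x u = s * K := by
      rw [hx, dist_eq_norm]
      have : u + s • (w - u) - u = s • (w - u) := by module
      rw [this, norm_smul, hK]
      simp [abs_of_nonneg hs0.le]
    rw [Metric.mem_ball, this]
    exact hsK
  have hxΩ : x ∈ Om := by
    rw [hΩ]
    exact ⟨hxU, hσsup hxσ⟩
  have hx0 : x 0 = s * w 0 := by
    rw [hx]
    simp only [Pi.add_apply, Pi.smul_apply, Pi.sub_apply, smul_eq_mul, hu,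
      Matrix.cons_val_zero]
    try ring
  have hx1 : x 1 = 2 + s * (w 1 - 2) := by
    rw [hx]
    simp only [Pi.add_apply, Pi.smul_apply, Pi.sub_apply, smul_eq_mul, hu,
      Matrix.cons_val_one, Matrix.head_cons, Matrix.cons_val_zero]
    try ring
  have hx1gt : 1 < x 1 := by
    rw [hx1]
    have := neg_abs_le (w 1 - 2)
    nlinarith
  rcases hxΩ with ⟨h1, h2⟩ | ⟨h1, _⟩ | ⟨h1, _⟩
  · have := le_abs_self (x 1)
    linarith
  · rw [hx0] at h1
    refine hw0 ?_
    rcases mul_eq_zero.mp h1 with h | h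
    · linarith
    · exact h
  · linarith

lemma line_face_full {σ ρ : Set (Vec 2)} (hline : ∀ x ∈ σ, x 0 = 0)
    (hface : IsFaceOf (σ ∩ ρ) σ) (h0 : (0 : Vec 2) ∈ σ ∩ ρ)
    (h1 : (![0, 1] : Vec 2) ∈ σ ∩ ρ) : σ ⊆ ρ := by
  rcases hface with heq | ⟨g, c, hb, heq⟩
  · intro x hx
    rw [← heq] at hx
    exact hx.2
  · have hc : c = 0 := by
      have := heq ▸ h0
      simp only [mem_setOf_eq, map_zero] at this
      exact this.2.symm
    have hq : g ![0, 1] = 0 := by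
      have := heq ▸ h1
      simp only [mem_setOf_eq] at this
      rw [this.2, hc]
    intro x hx
    have hgx : g x = c := by
      rw [lin_apply, hline x hx, hq, hc]
      ring
    have : x ∈ σ ∩ ρ := by
      rw [heq]
      exact ⟨hx, hgx⟩
    exact this.2

end StarAux
namespace StarAux

lemma not_polyStar : ¬ PolyStarShaped (0 : Vec 2) Om := by
  rintro ⟨D, ⟨U, hU, hΩ⟩, hstar⟩
  have hOmSup : Om ⊆ D.support := by
    rw [hΩ]; exact inter_subset_right
  -- the maximal cell σ containing the tip (0,2)
  obtain ⟨σ, hσD, huσ, hσmax⟩ := exists_maximal D (hOmSup mem_Om_top)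
  have hσstar := hstar σ hσD hσmax
  have hseg : ∀ t ∈ Icc (0:ℝ) 1, t • (![0,2] : Vec 2) ∈ σ ∩ Om := by
    intro t ht
    have := hσstar ![0,2] ⟨huσ, mem_Om_top⟩ t ht
    simpa using this
  have h0σ : (0 : Vec 2) ∈ σ ∩ Om := by
    have := hseg 0 ⟨le_refl _, zero_le_one⟩
    simpa using this
  have h1σ : (![0,1] : Vec 2) ∈ σ ∩ Om := by
    have := hseg (1/2) ⟨by norm_num, by norm_num⟩
    have he : (1/2 : ℝ) • (![0,2] : Vec 2) = ![0,1] := by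
      funext i; fin_cases i <;> simp <;> norm_num
    rwa [he] at this
  have hσsup : σ ⊆ D.support := fun x hx => mem_biUnion hσD hx
  have hσconv : Convex ℝ σ := IsPolyhedron.convex' (D.poly_mem σ hσD)
  have hσline : ∀ w ∈ σ, w 0 = 0 := inLine D U hU hΩ hσsup hσconv huσ
  -- the sequence of points approaching (0,1) from the right
  set z : ℕ → Vec 2 := fun n => ![1/(n+1 : ℝ), 1] with hz
  have hzOm : ∀ n, z n ∈ Om := by
    intro n
    left
    constructor
    · simp only [hz, Matrix.cons_val_zero]
      rw [abs_of_nonneg (by positivity)]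
      rw [div_le_one (by positivity)]
      have : (0:ℝ) ≤ n := Nat.cast_nonneg n
      linarith
    · simp [hz]
  have hch : ∀ n : ℕ, ∃ σ', σ' ∈ D.polys ∧ z n ∈ σ' ∧
      ∀ τ ∈ D.polys, IsFaceOf σ' τ → τ = σ' := fun n => exists_maximal D (hOmSup (hzOm n))
  choose F hF1 hF2 hF3 using hch
  haveI : Finite ↥D.polys := D.finite.to_subtype
  obtain ⟨y, hy⟩ := Finite.exists_infinite_fiber (fun n => (⟨F n, hF1 n⟩ : ↥D.polys))
  have hinf : {n : ℕ | F n = (y : Set (Vec 2))}.Infinite := by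
    have := Set.infinite_coe_iff.mp hy
    apply this.mono
    intro n hn
    simp only [mem_preimage, mem_singleton_iff] at hn
    exact congrArg Subtype.val hn
  set ρ : Set (Vec 2) := (y : Set (Vec 2)) with hρ
  have hρD : ρ ∈ D.polys := y.2
  obtain ⟨n0, hn0⟩ := hinf.nonempty
  have hρmax : ∀ τ ∈ D.polys, IsFaceOf ρ τ → τ = ρ := by
    rw [← hn0]; exact hF3 n0
  have hzρ : z n0 ∈ ρ := hn0 ▸ hF2 n0
  -- (0,1) is a limit of points of ρ
  have hρclosed : IsClosed ρ := IsPolyhedron.isClosed' (D.poly_mem ρ hρD)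
  have hfreq : ∃ᶠ n in Filter.atTop, z n ∈ ρ := by
    rw [Filter.frequently_atTop]
    intro a
    obtain ⟨b, hb, hab⟩ := hinf.exists_gt a
    exact ⟨b, hab.le, hb ▸ hF2 b⟩
  have htend : Filter.Tendsto z Filter.atTop (nhds (![0,1] : Vec 2)) := by
    rw [tendsto_pi_nhds]
    intro i
    fin_cases i
    · simpa [hz] using tendsto_one_div_add_atTop_nhds_zero_nat (𝕜 := ℝ)
    · simpa [hz] using (tendsto_const_nhds : Filter.Tendsto (fun _ : ℕ => (1:ℝ))
        Filter.atTop (nhds 1))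
  have h1ρ : (![0,1] : Vec 2) ∈ ρ := hρclosed.mem_of_frequently_of_tendsto hfreq htend
  have h1Om : (![0,1] : Vec 2) ∈ Om := by
    left
    constructor <;> simp
  -- star-shapedness of ρ ∩ Ω gives 0 ∈ ρ
  have h0ρ : (0 : Vec 2) ∈ ρ := by
    have := hstar ρ hρD hρmax ![0,1] ⟨h1ρ, h1Om⟩ 0 ⟨le_refl _, zero_le_one⟩
    simpa using this.1
  -- σ ∩ ρ is a face of σ, hence σ ⊆ ρ, hence the tip is in ρ
  have hface := D.inter_face σ hσD ρ hρD
  have hσρ : σ ⊆ ρ := line_face_full hσline hface ⟨h0σ.1, h0ρ⟩ ⟨h1σ.1, h1ρ⟩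
  have htopρ : (![0,2] : Vec 2) ∈ ρ := hσρ huσ
  -- hence ρ lies in the line, contradicting z n0 ∈ ρ
  have hρline : ∀ w ∈ ρ, w 0 = 0 :=
    inLine D U hU hΩ (fun x hx => mem_biUnion hρD hx)
      (IsPolyhedron.convex' (D.poly_mem ρ hρD)) htopρ
  have := hρline (z n0) hzρ
  simp only [hz, Matrix.cons_val_zero] at this
  have h1 : (0:ℝ) < 1/(n0+1 : ℝ) := by positivity
  rw [this] at h1
  exact lt_irrefl 0 h1

end StarAux
theorem starShaped_not_polyStarShaped :
    ∃ Ω : Set (Vec 2),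
      Ω = {x : Vec 2 | (|x 0| ≤ 1 ∧ |x 1| ≤ 1) ∨
            (x 0 = 0 ∧ x 1 ∈ Icc (1 : ℝ) 2) ∨
            (x 1 = 0 ∧ x 0 ∈ Icc (1 : ℝ) 2)} ∧
      IsCompact Ω ∧
      (∃ C : PolyComplex 2, Ω = C.support) ∧
      StarShapedWith (0 : Vec 2) Ω ∧
      ¬ PolyStarShaped (0 : Vec 2) Ω :=
  ⟨StarAux.Om, rfl, StarAux.Om_compact, ⟨StarAux.C, StarAux.Om_eq_support⟩,
    StarAux.Om_star, StarAux.not_polyStar⟩
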